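/- Let X be a Markov random field on a chordal graph 𝒢=(V,E), let v_1,…,v_N be a permutation of the vertices such that H(X) = Σ_{i=1}^N H(X_{v_i}|X_{A_{v_i}}) with A_{v_i} := N_{v_i} ∩ {v_1,…,v_{i-1}}, and assume that for each i the random variable Y_{v_i}=g_{v_i}(X_{v_i}) is conditionally independent of Y_{\{v_1,…,v_{i-1}\}} given X_{A_{v_i}}. Then H(X) ≤ Σ_{i=1}^N H(X_{v_i} | X_{A_{v_i}}, Y_{v_i}) + H(Y). -/
import Mathlib


open scoped Classical

/-!
Basic framework: tuples of finitely-valued random variables indexed by the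
vertex set `Fin N`, joint PMFs as real-valued functions, pushforward
distributions, Shannon entropy, conditional entropy, marginals, and Markov
random fields on simple graphs.
-/

variable {N : ℕ}

/-- The distribution of the discrete random variable `f` when the underlying
configuration `x` is distributed according to the joint PMF `p`. -/
noncomputable def dist {𝒳 : Fin N → Type*} [∀ i, Fintype (𝒳 i)] {β : Type*}
    (p : (∀ i, 𝒳 i) → ℝ) (f : (∀ i, 𝒳 i) → β) : β → ℝ :=
  fun b => ∑ x : ∀ i, 𝒳 i, if f x = b then p x else 0

/-- Shannon entropy `H(f)` of the random variable `f` under the joint PMF `p`. -/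
noncomputable def ent {𝒳 : Fin N → Type*} [∀ i, Fintype (𝒳 i)] {β : Type*} [Fintype β]
    (p : (∀ i, 𝒳 i) → ℝ) (f : (∀ i, 𝒳 i) → β) : ℝ :=
  ∑ b : β, Real.negMulLog (dist p f b)

/-- Conditional Shannon entropy `H(f | h) := H(f, h) - H(h)`. -/
noncomputable def condEnt {𝒳 : Fin N → Type*} [∀ i, Fintype (𝒳 i)] {β γ : Type*}
    [Fintype β] [Fintype γ]
    (p : (∀ i, 𝒳 i) → ℝ) (f : (∀ i, 𝒳 i) → β) (h : (∀ i, 𝒳 i) → γ) : ℝ :=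
  ent p (fun x => (f x, h x)) - ent p h

/-- Restriction of a configuration to the coordinates in `A` (i.e. `x_A`). -/
def restr {𝒳 : Fin N → Type*} (A : Finset (Fin N)) (x : ∀ i, 𝒳 i) : ∀ i : A, 𝒳 i.1 :=
  fun i => x i.1

/-- The marginal PMF of the coordinates in `A`, evaluated at `x_A`. -/
noncomputable def margin {𝒳 : Fin N → Type*} [∀ i, Fintype (𝒳 i)]
    (p : (∀ i, 𝒳 i) → ℝ) (A : Finset (Fin N)) (x : ∀ i, 𝒳 i) : ℝ :=
  dist p (restr A) (restr A x)

/-- The neighbors `N_i` of vertex `i` in the graph `G`. -/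
noncomputable def nbr (G : SimpleGraph (Fin N)) (i : Fin N) : Finset (Fin N) :=
  Finset.univ.filter (fun j => G.Adj i j)

/-- `p` is (the joint PMF of) a Markov random field on `G`: for every vertex `i`,
the conditional PMF of `X_i` given `X_{V∖{i}}` equals the conditional PMF of `X_i`
given `X_{N_i}`, expressed in cross-multiplied form (conditional independence of
`X_i` and `X_{V∖({i}∪N_i)}` given `X_{N_i}`). -/
def IsMRF {𝒳 : Fin N → Type*} [∀ i, Fintype (𝒳 i)]
    (G : SimpleGraph (Fin N)) (p : (∀ i, 𝒳 i) → ℝ) : Prop :=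
  ∀ (i : Fin N) (x : ∀ j, 𝒳 j),
    p x * margin p (nbr G i) x
      = margin p (Finset.univ.erase i) x * margin p (insert i (nbr G i)) x

/-- Coordinate-wise application of the functions `g_i`: `g(x) = (g_i(x_i), i ∈ V)`. -/
def gmap {𝒳 𝒴 : Fin N → Type*} (g : ∀ i, 𝒳 i → 𝒴 i) (x : ∀ i, 𝒳 i) : ∀ i, 𝒴 i :=
  fun i => g i (x i)

/-- The set `𝒞` of cliques of `G`: subsets all of whose two-element subsets are
edges (this includes all singletons). -/
noncomputable def cliques (G : SimpleGraph (Fin N)) : Finset (Finset (Fin N)) :=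
  Finset.univ.filter (fun C => G.IsClique (C : Set (Fin N)))

/-- `ψ` (a potential defined on all of `𝒳`) depends only on the coordinates in `C`. -/
def localTo {𝒳 : Fin N → Type*} (C : Finset (Fin N)) (ψ : (∀ i, 𝒳 i) → ℝ) : Prop :=
  ∀ x x' : ∀ i, 𝒳 i, (∀ i ∈ C, x i = x' i) → ψ x = ψ x'

/-- The potential `ψ` depends on the coordinate `x_i` only via `y_i = g_i(x_i)`:
changing `x_i` within a preimage `g_i⁻¹(y_i)` does not change the value of `ψ`.
The negation of this is "`ψ` strictly depends on `x_i`". -/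
def onlyVia {𝒳 𝒴 : Fin N → Type*} (g : ∀ i, 𝒳 i → 𝒴 i) (i : Fin N)
    (ψ : (∀ j, 𝒳 j) → ℝ) : Prop :=
  ∀ (x : ∀ j, 𝒳 j) (xi' : 𝒳 i), g i xi' = g i (x i) →
    ψ (Function.update x i xi') = ψ x

/-- `G` is chordal: every induced cycle of `G` has length three, i.e. there is no
induced (embedded) cycle of length at least four. -/
def IsChordal {V : Type*} (G : SimpleGraph V) : Prop :=
  ∀ n : ℕ, 3 < n → IsEmpty (SimpleGraph.cycleGraph n ↪g G)

/-- Given a permutation `v` of the vertices, `A_{v_i} := N_{v_i} ∩ {v_1, …, v_{i-1}}`. -/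
noncomputable def Aset (G : SimpleGraph (Fin N)) (v : Equiv.Perm (Fin N)) (i : Fin N) :
    Finset (Fin N) :=
  nbr G (v i) ∩ (Finset.Iio i).image v

lemma gibbs' {ι : Type*} [Fintype ι] (q r : ι → ℝ) (hq : ∀ i, 0 ≤ q i) (hr : ∀ i, 0 ≤ r i)
    (hqr : ∀ i, 0 < q i → 0 < r i) (hq1 : ∑ i, q i = 1) (hr1 : ∑ i, r i ≤ 1) :
    ∑ i, q i * Real.log (r i) ≤ ∑ i, q i * Real.log (q i) := by
  have key : ∀ i, q i * Real.log (r i) - q i * Real.log (q i) ≤ r i - q i := by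
    intro i
    rcases eq_or_lt_of_le (hq i) with h | h
    · rw [← h]; simpa using hr i
    · have hri := hqr i h
      have hl : Real.log (r i / q i) ≤ r i / q i - 1 :=
        Real.log_le_sub_one_of_pos (div_pos hri h)
      rw [Real.log_div (ne_of_gt hri) (ne_of_gt h)] at hl
      have h2 := mul_le_mul_of_nonneg_left hl (le_of_lt h)
      have h3 : q i * (r i / q i) = r i := by field_simp
      nlinarith
  have h4 : ∑ i, (q i * Real.log (r i) - q i * Real.log (q i)) ≤ ∑ i, (r i - q i) :=
    Finset.sum_le_sum fun i _ => key i
  rw [Finset.sum_sub_distrib, Finset.sum_sub_distrib, hq1] at h4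
  linarith

set_option linter.unusedSectionVars false
set_option maxHeartbeats 1000000

section auxlemmas
variable {𝒳 : Fin N → Type*} [∀ i, Fintype (𝒳 i)] {α β γ : Type*}
  [Fintype α] [Fintype β] [Fintype γ]
  (p : (∀ i, 𝒳 i) → ℝ)

lemma dist_nonneg' (hnn : ∀ x, 0 ≤ p x) (f : (∀ i, 𝒳 i) → β) (b : β) :
    0 ≤ _root_.dist p f b := by
  refine Finset.sum_nonneg fun x _ => ?_
  split <;> simp [hnn x]

lemma sum_dist (f : (∀ i, 𝒳 i) → β) :
    ∑ b : β, _root_.dist p f b = ∑ x : ∀ i, 𝒳 i, p x := by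
  simp only [_root_.dist]
  rw [Finset.sum_comm]
  simp

lemma dist_marg_fst (F : (∀ i, 𝒳 i) → α) (H : (∀ i, 𝒳 i) → γ) (c : γ) :
    ∑ a : α, _root_.dist p (fun x => (F x, H x)) (a, c) = _root_.dist p H c := by
  simp only [_root_.dist]
  rw [Finset.sum_comm]
  refine Finset.sum_congr rfl fun x _ => ?_
  simp [Prod.ext_iff, ite_and]

lemma dist_marg_snd (F : (∀ i, 𝒳 i) → α) (H : (∀ i, 𝒳 i) → γ) (a : α) :
    ∑ c : γ, _root_.dist p (fun x => (F x, H x)) (a, c) = _root_.dist p F a := by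
  simp only [_root_.dist]
  rw [Finset.sum_comm]
  refine Finset.sum_congr rfl fun x _ => ?_
  simp [Prod.ext_iff, ite_and]

lemma dist_marg_mid (A : (∀ i, 𝒳 i) → α) (B : (∀ i, 𝒳 i) → β) (C : (∀ i, 𝒳 i) → γ)
    (a : α) (c : γ) :
    ∑ b : β, _root_.dist p (fun x => (A x, B x, C x)) (a, b, c)
      = _root_.dist p (fun x => (A x, C x)) (a, c) := by
  simp only [_root_.dist]
  rw [Finset.sum_comm]
  refine Finset.sum_congr rfl fun x _ => ?_
  simp [Prod.ext_iff, ite_and]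

lemma dist_marg_last (A : (∀ i, 𝒳 i) → α) (B : (∀ i, 𝒳 i) → β) (C : (∀ i, 𝒳 i) → γ)
    (a : α) (b : β) :
    ∑ c : γ, _root_.dist p (fun x => (A x, B x, C x)) (a, b, c)
      = _root_.dist p (fun x => (A x, B x)) (a, b) := by
  simp only [_root_.dist]
  rw [Finset.sum_comm]
  refine Finset.sum_congr rfl fun x _ => ?_
  simp [Prod.ext_iff, ite_and]

lemma ent_eq_neg_sum (f : (∀ i, 𝒳 i) → β) :
    ent p f = -∑ b : β, _root_.dist p f b * Real.log (_root_.dist p f b) := by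
  simp [ent, Real.negMulLog, neg_mul, ← Finset.sum_neg_distrib]

/-- CI implies H(A,B,C) + H(C) = H(A,C) + H(B,C). -/
lemma ent_ci (hnn : ∀ x, 0 ≤ p x)
    (A : (∀ i, 𝒳 i) → α) (B : (∀ i, 𝒳 i) → β) (C : (∀ i, 𝒳 i) → γ)
    (hci : ∀ a b c, _root_.dist p (fun x => (A x, B x, C x)) (a, b, c) * _root_.dist p C c
      = _root_.dist p (fun x => (A x, C x)) (a, c)
        * _root_.dist p (fun x => (B x, C x)) (b, c)) :
    ent p (fun x => (A x, B x, C x)) + ent p C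
      = ent p (fun x => (A x, C x)) + ent p (fun x => (B x, C x)) := by
  set q := _root_.dist p (fun x => (A x, B x, C x)) with hq
  set qAC := _root_.dist p (fun x => (A x, C x)) with hqac
  set qBC := _root_.dist p (fun x => (B x, C x)) with hqbc
  set qC := _root_.dist p C with hqc
  have qnn : ∀ t, 0 ≤ q t := fun t => dist_nonneg' p hnn _ t
  have hmB : ∀ a c, ∑ b : β, q (a, b, c) = qAC (a, c) := fun a c => dist_marg_mid p A B C a c
  have hmA : ∀ b c, ∑ a : α, q (a, b, c) = qBC (b, c) := fun b c =>
    dist_marg_fst p A (fun x => (B x, C x)) (b, c)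
  have hmBC : ∀ c, ∑ b : β, qBC (b, c) = qC c := fun c => dist_marg_fst p B C c
  have hmACc : ∀ c, ∑ a : α, qAC (a, c) = qC c := fun c => dist_marg_fst p A C c
  have hpt : ∀ a b c, q (a, b, c) * Real.log (q (a, b, c))
      = q (a, b, c) * Real.log (qAC (a, c)) + q (a, b, c) * Real.log (qBC (b, c))
        - q (a, b, c) * Real.log (qC c) := by
    intro a b c
    rcases eq_or_lt_of_le (qnn (a, b, c)) with h | h
    · rw [← h]; ring
    · have hac : 0 < qAC (a, c) := lt_of_lt_of_le h
        ((hmB a c) ▸ Finset.single_le_sum (fun b' _ => qnn (a, b', c)) (Finset.mem_univ b))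
      have hbc : 0 < qBC (b, c) := lt_of_lt_of_le h
        ((hmA b c) ▸ Finset.single_le_sum (fun a' _ => qnn (a', b, c)) (Finset.mem_univ a))
      have hc : 0 < qC c := lt_of_lt_of_le hbc
        ((hmBC c) ▸ Finset.single_le_sum
          (fun b' _ => dist_nonneg' p hnn _ (b', c)) (Finset.mem_univ b))
      have hlog : Real.log (q (a, b, c) * qC c) = Real.log (qAC (a, c) * qBC (b, c)) := by
        rw [hci a b c]
      rw [Real.log_mul h.ne' hc.ne', Real.log_mul hac.ne' hbc.ne'] at hlog
      have : Real.log (q (a, b, c)) =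
          Real.log (qAC (a, c)) + Real.log (qBC (b, c)) - Real.log (qC c) := by linarith
      rw [this]; ring
  have tAC : ∑ a : α, ∑ b : β, ∑ c : γ, q (a, b, c) * Real.log (qAC (a, c))
      = ∑ a : α, ∑ c : γ, qAC (a, c) * Real.log (qAC (a, c)) := by
    refine Finset.sum_congr rfl fun a _ => ?_
    rw [Finset.sum_comm]
    exact Finset.sum_congr rfl fun c _ => by rw [← Finset.sum_mul, hmB a c]
  have tBC : ∑ a : α, ∑ b : β, ∑ c : γ, q (a, b, c) * Real.log (qBC (b, c))
      = ∑ b : β, ∑ c : γ, qBC (b, c) * Real.log (qBC (b, c)) := by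
    rw [Finset.sum_comm]
    refine Finset.sum_congr rfl fun b _ => ?_
    rw [Finset.sum_comm]
    exact Finset.sum_congr rfl fun c _ => by rw [← Finset.sum_mul, hmA b c]
  have tC : ∑ a : α, ∑ b : β, ∑ c : γ, q (a, b, c) * Real.log (qC c)
      = ∑ c : γ, qC c * Real.log (qC c) := by
    have step : ∀ a : α, ∑ b : β, ∑ c : γ, q (a, b, c) * Real.log (qC c)
        = ∑ c : γ, qAC (a, c) * Real.log (qC c) := by
      intro a
      rw [Finset.sum_comm]
      exact Finset.sum_congr rfl fun c _ => by rw [← Finset.sum_mul, hmB a c]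
    rw [Finset.sum_congr rfl fun a _ => step a, Finset.sum_comm]
    exact Finset.sum_congr rfl fun c _ => by rw [← Finset.sum_mul, hmACc c]
  have s1 : ∑ a : α, ∑ b : β, ∑ c : γ, q (a, b, c) * Real.log (q (a, b, c))
      = (∑ a : α, ∑ c : γ, qAC (a, c) * Real.log (qAC (a, c)))
        + (∑ b : β, ∑ c : γ, qBC (b, c) * Real.log (qBC (b, c)))
        - ∑ c : γ, qC c * Real.log (qC c) := by
    rw [← tAC, ← tBC, ← tC]
    simp only [← Finset.sum_add_distrib, ← Finset.sum_sub_distrib]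
    exact Finset.sum_congr rfl fun a _ => Finset.sum_congr rfl fun b _ =>
      Finset.sum_congr rfl fun c _ => hpt a b c
  have e1 : ent p (fun x => (A x, B x, C x))
      = -∑ a : α, ∑ b : β, ∑ c : γ, q (a, b, c) * Real.log (q (a, b, c)) := by
    rw [ent_eq_neg_sum]
    simp only [Fintype.sum_prod_type, ← hq]
  have e3 : ent p (fun x => (A x, C x))
      = -∑ a : α, ∑ c : γ, qAC (a, c) * Real.log (qAC (a, c)) := by
    rw [ent_eq_neg_sum]
    simp only [Fintype.sum_prod_type, ← hqac]
  have e4 : ent p (fun x => (B x, C x))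
      = -∑ b : β, ∑ c : γ, qBC (b, c) * Real.log (qBC (b, c)) := by
    rw [ent_eq_neg_sum]
    simp only [Fintype.sum_prod_type, ← hqbc]
  have e2 : ent p C = -∑ c : γ, qC c * Real.log (qC c) := by
    rw [ent_eq_neg_sum]
  rw [e1, e2, e3, e4]
  linarith
/-- H(A | B,C) ≤ H(A | B), in subtracted form. -/
lemma ent_drop (hnn : ∀ x, 0 ≤ p x) (hsum : ∑ x : ∀ i, 𝒳 i, p x = 1)
    (A : (∀ i, 𝒳 i) → α) (B : (∀ i, 𝒳 i) → β) (C : (∀ i, 𝒳 i) → γ) :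
    ent p (fun x => (A x, B x, C x)) - ent p (fun x => (B x, C x))
      ≤ ent p (fun x => (A x, B x)) - ent p B := by
  set q := _root_.dist p (fun x => (A x, B x, C x)) with hq
  set qAB := _root_.dist p (fun x => (A x, B x)) with hqab
  set qBC := _root_.dist p (fun x => (B x, C x)) with hqbc
  set qB := _root_.dist p B with hqb
  have qnn : ∀ t, 0 ≤ q t := fun t => dist_nonneg' p hnn _ t
  have qabnn : ∀ t, 0 ≤ qAB t := fun t => dist_nonneg' p hnn _ t
  have qbcnn : ∀ t, 0 ≤ qBC t := fun t => dist_nonneg' p hnn _ t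
  have qbnn : ∀ t, 0 ≤ qB t := fun t => dist_nonneg' p hnn _ t
  have hmA : ∀ b c, ∑ a : α, q (a, b, c) = qBC (b, c) := fun b c =>
    dist_marg_fst p A (fun x => (B x, C x)) (b, c)
  have hmC : ∀ a b, ∑ c : γ, q (a, b, c) = qAB (a, b) := fun a b =>
    dist_marg_last p A B C a b
  have hmB1 : ∀ b, ∑ a : α, qAB (a, b) = qB b := fun b => dist_marg_fst p A B b
  have hmB2 : ∀ b, ∑ c : γ, qBC (b, c) = qB b := fun b => dist_marg_snd p B C b
  set r : α × β × γ → ℝ := fun t => qAB (t.1, t.2.1) * qBC (t.2.1, t.2.2) / qB t.2.1 with hr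
  have rnn : ∀ t, 0 ≤ r t := fun t =>
    div_nonneg (mul_nonneg (qabnn _) (qbcnn _)) (qbnn _)
  have hqr : ∀ t, 0 < q t → 0 < r t := by
    rintro ⟨a, b, c⟩ h
    have hab : 0 < qAB (a, b) := lt_of_lt_of_le h
      ((hmC a b) ▸ Finset.single_le_sum (fun c' _ => qnn (a, b, c')) (Finset.mem_univ c))
    have hbc : 0 < qBC (b, c) := lt_of_lt_of_le h
      ((hmA b c) ▸ Finset.single_le_sum (fun a' _ => qnn (a', b, c)) (Finset.mem_univ a))
    have hb : 0 < qB b := lt_of_lt_of_le hab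
      ((hmB1 b) ▸ Finset.single_le_sum (fun a' _ => qabnn (a', b)) (Finset.mem_univ a))
    exact div_pos (mul_pos hab hbc) hb
  have hq1 : ∑ t : α × β × γ, q t = 1 := by rw [hq, sum_dist p _, hsum]
  have hr1 : ∑ t : α × β × γ, r t ≤ 1 := by
    have step : ∀ a b, ∑ c : γ, qAB (a, b) * qBC (b, c) / qB b ≤ qAB (a, b) := by
      intro a b
      rw [← Finset.sum_div, ← Finset.mul_sum, hmB2 b]
      rcases eq_or_lt_of_le (qbnn b) with h | h
      · rw [← h]; simpa using qabnn (a, b)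
      · rw [mul_div_assoc, div_self h.ne', mul_one]
    calc ∑ t : α × β × γ, r t = ∑ a : α, ∑ b : β, ∑ c : γ, qAB (a, b) * qBC (b, c) / qB b := by
          simp only [Fintype.sum_prod_type, hr]
      _ ≤ ∑ a : α, ∑ b : β, qAB (a, b) := by
          refine Finset.sum_le_sum fun a _ => Finset.sum_le_sum fun b _ => step a b
      _ = 1 := by rw [← Fintype.sum_prod_type, hqab, sum_dist p _, hsum]
  have key := gibbs' q r qnn rnn hqr hq1 hr1
  -- pointwise expansion of log r
  have hpt : ∀ a b c, q (a, b, c) * Real.log (r (a, b, c))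
      = q (a, b, c) * Real.log (qAB (a, b)) + q (a, b, c) * Real.log (qBC (b, c))
        - q (a, b, c) * Real.log (qB b) := by
    intro a b c
    rcases eq_or_lt_of_le (qnn (a, b, c)) with h | h
    · rw [← h]; ring
    · have hrp := hqr (a, b, c) h
      have hab : 0 < qAB (a, b) := lt_of_lt_of_le h
        ((hmC a b) ▸ Finset.single_le_sum (fun c' _ => qnn (a, b, c')) (Finset.mem_univ c))
      have hbc : 0 < qBC (b, c) := lt_of_lt_of_le h
        ((hmA b c) ▸ Finset.single_le_sum (fun a' _ => qnn (a', b, c)) (Finset.mem_univ a))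
      have hb : 0 < qB b := lt_of_lt_of_le hab
        ((hmB1 b) ▸ Finset.single_le_sum (fun a' _ => qabnn (a', b)) (Finset.mem_univ a))
      have : Real.log (r (a, b, c))
          = Real.log (qAB (a, b)) + Real.log (qBC (b, c)) - Real.log (qB b) := by
        rw [hr]
        rw [Real.log_div (mul_pos hab hbc).ne' hb.ne', Real.log_mul hab.ne' hbc.ne']
      rw [this]; ring
  have tAB : ∑ a : α, ∑ b : β, ∑ c : γ, q (a, b, c) * Real.log (qAB (a, b))
      = ∑ a : α, ∑ b : β, qAB (a, b) * Real.log (qAB (a, b)) := by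
    refine Finset.sum_congr rfl fun a _ => Finset.sum_congr rfl fun b _ => ?_
    rw [← Finset.sum_mul, hmC a b]
  have tBC : ∑ a : α, ∑ b : β, ∑ c : γ, q (a, b, c) * Real.log (qBC (b, c))
      = ∑ b : β, ∑ c : γ, qBC (b, c) * Real.log (qBC (b, c)) := by
    rw [Finset.sum_comm]
    refine Finset.sum_congr rfl fun b _ => ?_
    rw [Finset.sum_comm]
    exact Finset.sum_congr rfl fun c _ => by rw [← Finset.sum_mul, hmA b c]
  have tB : ∑ a : α, ∑ b : β, ∑ c : γ, q (a, b, c) * Real.log (qB b)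
      = ∑ b : β, qB b * Real.log (qB b) := by
    have step : ∀ a : α, ∑ b : β, ∑ c : γ, q (a, b, c) * Real.log (qB b)
        = ∑ b : β, qAB (a, b) * Real.log (qB b) := fun a =>
      Finset.sum_congr rfl fun b _ => by rw [← Finset.sum_mul, hmC a b]
    rw [Finset.sum_congr rfl fun a _ => step a, Finset.sum_comm]
    exact Finset.sum_congr rfl fun b _ => by rw [← Finset.sum_mul, hmB1 b]
  have left : ∑ t : α × β × γ, q t * Real.log (r t)
      = (∑ a : α, ∑ b : β, qAB (a, b) * Real.log (qAB (a, b)))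
        + (∑ b : β, ∑ c : γ, qBC (b, c) * Real.log (qBC (b, c)))
        - ∑ b : β, qB b * Real.log (qB b) := by
    rw [← tAB, ← tBC, ← tB]
    simp only [Fintype.sum_prod_type]
    simp only [← Finset.sum_add_distrib, ← Finset.sum_sub_distrib]
    exact Finset.sum_congr rfl fun a _ => Finset.sum_congr rfl fun b _ =>
      Finset.sum_congr rfl fun c _ => hpt a b c
  have e1 : ent p (fun x => (A x, B x, C x))
      = -∑ t : α × β × γ, q t * Real.log (q t) := ent_eq_neg_sum p _
  have e2 : ent p (fun x => (B x, C x))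
      = -∑ b : β, ∑ c : γ, qBC (b, c) * Real.log (qBC (b, c)) := by
    rw [ent_eq_neg_sum]
    simp only [Fintype.sum_prod_type, ← hqbc]
  have e3 : ent p (fun x => (A x, B x))
      = -∑ a : α, ∑ b : β, qAB (a, b) * Real.log (qAB (a, b)) := by
    rw [ent_eq_neg_sum]
    simp only [Fintype.sum_prod_type, ← hqab]
  have e4 : ent p B = -∑ b : β, qB b * Real.log (qB b) := ent_eq_neg_sum p _
  rw [e1, e2, e3, e4]
  rw [left] at key
  linarith
lemma ent_comp_of_injective (f : (∀ i, 𝒳 i) → β) (φ : β → γ) (hφ : Function.Injective φ) :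
    ent p (fun x => φ (f x)) = ent p f := by
  unfold ent
  rw [← Finset.sum_subset (Finset.subset_univ (Finset.univ.image φ))]
  · rw [Finset.sum_image (by exact fun a _ b _ h => hφ h)]
    refine Finset.sum_congr rfl fun b _ => ?_
    congr 1
    simp only [_root_.dist]
    exact Finset.sum_congr rfl fun x _ => by simp [hφ.eq_iff]
  · intro c _ hc
    rw [Finset.mem_image] at hc; push_neg at hc
    have : _root_.dist p (fun x => φ (f x)) c = 0 := by
      refine Finset.sum_eq_zero fun x _ => ?_
      exact if_neg (fun h => hc (f x) (Finset.mem_univ _) h)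
    rw [this, Real.negMulLog_zero]

lemma ent_subsingleton [Subsingleton β] (hsum : ∑ x : ∀ i, 𝒳 i, p x = 1)
    (f : (∀ i, 𝒳 i) → β) : ent p f = 0 := by
  unfold ent
  refine Finset.sum_eq_zero fun b _ => ?_
  have : _root_.dist p f b = 1 := by
    rw [← hsum]
    exact Finset.sum_congr rfl fun x _ => by rw [if_pos (Subsingleton.elim _ _)]
  rw [this, Real.negMulLog_one]


end auxlemmas


section relabel
variable {𝒳 𝒴 : Fin N → Type*} [∀ i, Fintype (𝒳 i)] [∀ i, Fintype (𝒴 i)]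
  (p : (∀ i, 𝒳 i) → ℝ) (g : ∀ i, 𝒳 i → 𝒴 i) (v : Equiv.Perm (Fin N))

lemma ent_restr_pair (i : Fin N) (T : Finset (Fin N)) (hvT : v i ∈ T)
    (hsub : ∀ j ∈ (Finset.Iio i).image v, j ∈ T)
    (hcov : ∀ j ∈ T, j = v i ∨ j ∈ (Finset.Iio i).image v) :
    ent p (fun x => (g (v i) (x (v i)), restr ((Finset.Iio i).image v) (gmap g x)))
      = ent p (fun x => restr T (gmap g x)) := by
  refine ent_comp_of_injective p (fun x => restr T (gmap g x))
    (fun y => (y ⟨v i, hvT⟩, fun j : ((Finset.Iio i).image v : Finset (Fin N)) => y ⟨j.1, hsub j.1 j.2⟩)) ?_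
  intro y y' h
  have h1 : y ⟨v i, hvT⟩ = y' ⟨v i, hvT⟩ := congrArg Prod.fst h
  have h2 : ∀ j : ((Finset.Iio i).image v : Finset (Fin N)),
      y ⟨j.1, hsub j.1 j.2⟩ = y' ⟨j.1, hsub j.1 j.2⟩ :=
    fun j => congrFun (congrArg Prod.snd h) j
  funext j0
  obtain ⟨j, hj⟩ := j0
  rcases hcov j hj with he | hm
  · have he' : (⟨j, hj⟩ : {x // x ∈ T}) = ⟨v i, hvT⟩ := Subtype.ext he
    rw [he']; exact h1
  · exact h2 ⟨j, hm⟩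

lemma ent_gmap_pair (i : Fin N)
    (hcov : ∀ t : Fin N, t = v i ∨ t ∈ (Finset.Iio i).image v) :
    ent p (fun x => (g (v i) (x (v i)), restr ((Finset.Iio i).image v) (gmap g x)))
      = ent p (gmap g) := by
  refine ent_comp_of_injective p (gmap g)
    (fun y => (y (v i), fun j : ((Finset.Iio i).image v : Finset (Fin N)) => y j.1)) ?_
  intro y y' h
  funext t
  rcases hcov t with he | hm
  · rw [he]; exact congrArg Prod.fst h
  · exact congrFun (congrArg Prod.snd h) ⟨t, hm⟩

end relabel

/-- Let `X` be a MRF on the chordal graph `𝒢`, let `v_1,…,v_N`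
be a vertex permutation along which `H(X) = Σ_i H(X_{v_i} | X_{A_{v_i}})` with
`A_{v_i} = N_{v_i} ∩ {v_1,…,v_{i-1}}`, and assume that for each `i` the random
variable `Y_{v_i} = g_{v_i}(X_{v_i})` is conditionally independent of
`Y_{{v_1,…,v_{i-1}}}` given `X_{A_{v_i}}`. Then
`H(X) ≤ Σ_{i=1}^N H(X_{v_i} | X_{A_{v_i}}, Y_{v_i}) + H(Y)`. -/
theorem entropy_le_of_condIndep {𝒳 𝒴 : Fin N → Type*}
    [∀ i, Fintype (𝒳 i)] [∀ i, Fintype (𝒴 i)]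
    (G : SimpleGraph (Fin N)) (hchordal : IsChordal G)
    (p : (∀ i, 𝒳 i) → ℝ)
    (hnn : ∀ x, 0 ≤ p x) (hsum : ∑ x : ∀ i, 𝒳 i, p x = 1)
    (hMRF : IsMRF G p)
    (g : ∀ i, 𝒳 i → 𝒴 i)
    (v : Equiv.Perm (Fin N))
    (hdecomp : ent p id
      = ∑ i : Fin N, condEnt p (fun x => x (v i)) (restr (Aset G v i)))
    (hCI : ∀ (i : Fin N) (a : 𝒴 (v i))
        (b : ∀ j : ((Finset.Iio i).image v : Finset (Fin N)), 𝒴 j.1)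
        (c : ∀ j : (Aset G v i : Finset (Fin N)), 𝒳 j.1),
      dist p (fun x => (g (v i) (x (v i)),
            restr ((Finset.Iio i).image v) (gmap g x), restr (Aset G v i) x))
          (a, b, c)
        * dist p (restr (Aset G v i)) c
      = dist p (fun x => (g (v i) (x (v i)), restr (Aset G v i) x)) (a, c)
        * dist p (fun x => (restr ((Finset.Iio i).image v) (gmap g x),
              restr (Aset G v i) x)) (b, c)) :
    ent p id
      ≤ (∑ i : Fin N, condEnt p (fun x => x (v i))
          (fun x => (restr (Aset G v i) x, g (v i) (x (v i)))))
        + ent p (gmap g) := by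
  classical
  -- Step A : H(X_i | A_i) = H(X_i | A_i, Y_i) + H(Y_i | A_i)
  have stepA : ∀ i : Fin N,
      condEnt p (fun x => x (v i)) (restr (Aset G v i))
        = condEnt p (fun x => x (v i))
            (fun x => (restr (Aset G v i) x, g (v i) (x (v i))))
          + condEnt p (fun x => g (v i) (x (v i))) (restr (Aset G v i)) := by
    intro i
    have h1 : ent p (fun x => ((x (v i)), (restr (Aset G v i) x, g (v i) (x (v i)))))
        = ent p (fun x => (x (v i), restr (Aset G v i) x)) := by
      refine ent_comp_of_injective p (fun x => (x (v i), restr (Aset G v i) x))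
        (fun t => (t.1, (t.2, g (v i) t.1))) ?_
      intro t t' h
      cases t; cases t'
      simp only [Prod.mk.injEq] at h ⊢
      exact ⟨h.1, h.2.1⟩
    have h2 : ent p (fun x => (g (v i) (x (v i)), restr (Aset G v i) x))
        = ent p (fun x => (restr (Aset G v i) x, g (v i) (x (v i)))) := by
      exact ent_comp_of_injective p
        (fun x => (restr (Aset G v i) x, g (v i) (x (v i)))) Prod.swap
        Prod.swap_injective
    simp only [condEnt]
    rw [h1, h2]
    ring
  -- Step B : by conditional independence, H(Y_i | A_i) = H(Y_i | Y_{<i}, A_i)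
  have stepB : ∀ i : Fin N,
      condEnt p (fun x => g (v i) (x (v i))) (restr (Aset G v i))
        = condEnt p (fun x => g (v i) (x (v i)))
            (fun x => (restr ((Finset.Iio i).image v) (gmap g x), restr (Aset G v i) x)) := by
    intro i
    have hci : ent p (fun x => (g (v i) (x (v i)),
            restr ((Finset.Iio i).image v) (gmap g x), restr (Aset G v i) x))
          + ent p (restr (Aset G v i))
        = ent p (fun x => (g (v i) (x (v i)), restr (Aset G v i) x))
          + ent p (fun x => (restr ((Finset.Iio i).image v) (gmap g x),
              restr (Aset G v i) x)) :=
      ent_ci p hnn (fun x => g (v i) (x (v i)))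
        (fun x => restr ((Finset.Iio i).image v) (gmap g x))
        (restr (Aset G v i)) (fun a b c => hCI i a b c)
    have e1 : condEnt p (fun x => g (v i) (x (v i))) (restr (Aset G v i))
        = ent p (fun x => (g (v i) (x (v i)), restr (Aset G v i) x))
          - ent p (restr (Aset G v i)) := rfl
    have e2 : condEnt p (fun x => g (v i) (x (v i)))
          (fun x => (restr ((Finset.Iio i).image v) (gmap g x), restr (Aset G v i) x))
        = ent p (fun x => (g (v i) (x (v i)),
            restr ((Finset.Iio i).image v) (gmap g x), restr (Aset G v i) x))
          - ent p (fun x => (restr ((Finset.Iio i).image v) (gmap g x),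
              restr (Aset G v i) x)) := rfl
    rw [e1, e2]
    linarith
  -- Step C : conditioning reduces entropy
  have stepC : ∀ i : Fin N,
      condEnt p (fun x => g (v i) (x (v i)))
          (fun x => (restr ((Finset.Iio i).image v) (gmap g x), restr (Aset G v i) x))
        ≤ condEnt p (fun x => g (v i) (x (v i)))
            (fun x => restr ((Finset.Iio i).image v) (gmap g x)) := by
    intro i
    exact ent_drop p hnn hsum (fun x => g (v i) (x (v i)))
      (fun x => restr ((Finset.Iio i).image v) (gmap g x)) (restr (Aset G v i))
  -- Step D : chain rule, ∑ H(Y_i | Y_{<i}) = H(Y)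
  have stepD : ∑ i : Fin N, condEnt p (fun x => g (v i) (x (v i)))
      (fun x => restr ((Finset.Iio i).image v) (gmap g x)) = ent p (gmap g) := by
    by_cases hN : N = 0
    · subst hN
      haveI : Subsingleton (∀ i : Fin 0, 𝒴 i) := ⟨fun a b => funext fun i => i.elim0⟩
      rw [ent_subsingleton p hsum (gmap g)]
      simp
    · have hN' : 0 < N := Nat.pos_of_ne_zero hN
      set S : ℕ → ℝ := fun k => if h : k < N then
          ent p (fun x => restr ((Finset.Iio (⟨k, h⟩ : Fin N)).image v) (gmap g x))
        else ent p (gmap g) with hS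
      have hterm : ∀ i : Fin N, condEnt p (fun x => g (v i) (x (v i)))
          (fun x => restr ((Finset.Iio i).image v) (gmap g x))
            = S (i.1 + 1) - S i.1 := by
        intro i
        have eS0 : S i.1 = ent p (fun x => restr ((Finset.Iio i).image v) (gmap g x)) := by
          simp only [hS]
          rw [dif_pos i.2]
        have epair : ent p (fun x => (g (v i) (x (v i)),
            restr ((Finset.Iio i).image v) (gmap g x))) = S (i.1 + 1) := by
          rcases lt_or_eq_of_le (Nat.succ_le_of_lt i.2) with h | h
          · have e1 := ent_restr_pair p g v i ((Finset.Iio (⟨i.1 + 1, h⟩ : Fin N)).image v)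
              (Finset.mem_image.2 ⟨i, Finset.mem_Iio.2 (by simp [Fin.lt_def]), rfl⟩)
              (by
                intro j hj
                simp only [Finset.mem_image, Finset.mem_Iio, Fin.lt_def] at hj ⊢
                obtain ⟨t, ht, rfl⟩ := hj
                exact ⟨t, by omega, rfl⟩)
              (by
                intro j hj
                simp only [Finset.mem_image, Finset.mem_Iio, Fin.lt_def] at hj
                obtain ⟨t, ht, rfl⟩ := hj
                rcases Nat.lt_succ_iff_lt_or_eq.1 ht with h' | h'
                · exact Or.inr (Finset.mem_image.2 ⟨t, Finset.mem_Iio.2 h', rfl⟩)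
                · exact Or.inl (congrArg v (Fin.ext h')))
            rw [e1]
            simp only [hS]
            rw [dif_pos h]
          · have e1 := ent_gmap_pair p g v i (by
              intro t
              obtain ⟨s, rfl⟩ : ∃ s, v s = t := ⟨v.symm t, v.apply_symm_apply t⟩
              have hs : s.1 < i.1 + 1 := by have := s.2; omega
              rcases Nat.lt_succ_iff_lt_or_eq.1 hs with h' | h'
              · exact Or.inr (Finset.mem_image.2 ⟨s, Finset.mem_Iio.2 h', rfl⟩)
              · exact Or.inl (congrArg v (Fin.ext h')))
            rw [e1]
            simp only [hS]
            rw [dif_neg (by omega)]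
        have : condEnt p (fun x => g (v i) (x (v i)))
            (fun x => restr ((Finset.Iio i).image v) (gmap g x))
              = ent p (fun x => (g (v i) (x (v i)),
                  restr ((Finset.Iio i).image v) (gmap g x)))
                - ent p (fun x => restr ((Finset.Iio i).image v) (gmap g x)) := rfl
        rw [this, epair, eS0]
      have hS0 : S 0 = 0 := by
        simp only [hS]
        rw [dif_pos hN']
        haveI : Subsingleton
            (∀ j : ((Finset.Iio (⟨0, hN'⟩ : Fin N)).image v : Finset (Fin N)), 𝒴 j.1) := by
          constructor
          intro a b
          funext j
          exfalso
          have hj := j.2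
          simp only [Finset.mem_image, Finset.mem_Iio, Fin.lt_def] at hj
          obtain ⟨t, ht, -⟩ := hj
          omega
        exact ent_subsingleton p hsum _
      have hSN : S N = ent p (gmap g) := by
        simp only [hS]
        rw [dif_neg (lt_irrefl N)]
      calc ∑ i : Fin N, condEnt p (fun x => g (v i) (x (v i)))
            (fun x => restr ((Finset.Iio i).image v) (gmap g x))
          = ∑ i : Fin N, (S (i.1 + 1) - S i.1) :=
            Finset.sum_congr rfl fun i _ => hterm i
        _ = ∑ k ∈ Finset.range N, (S (k + 1) - S k) :=
            Fin.sum_univ_eq_sum_range (fun k => S (k + 1) - S k) N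
        _ = S N - S 0 := Finset.sum_range_sub S N
        _ = ent p (gmap g) := by rw [hSN, hS0, sub_zero]
  -- assemble
  have hA : ∑ i : Fin N, condEnt p (fun x => x (v i)) (restr (Aset G v i))
      = (∑ i : Fin N, condEnt p (fun x => x (v i))
          (fun x => (restr (Aset G v i) x, g (v i) (x (v i)))))
        + ∑ i : Fin N, condEnt p (fun x => g (v i) (x (v i))) (restr (Aset G v i)) := by
    rw [← Finset.sum_add_distrib]
    exact Finset.sum_congr rfl fun i _ => stepA i
  have hB : ∑ i : Fin N, condEnt p (fun x => g (v i) (x (v i))) (restr (Aset G v i))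
      = ∑ i : Fin N, condEnt p (fun x => g (v i) (x (v i)))
          (fun x => (restr ((Finset.Iio i).image v) (gmap g x), restr (Aset G v i) x)) :=
    Finset.sum_congr rfl fun i _ => stepB i
  have hC : ∑ i : Fin N, condEnt p (fun x => g (v i) (x (v i)))
        (fun x => (restr ((Finset.Iio i).image v) (gmap g x), restr (Aset G v i) x))
      ≤ ∑ i : Fin N, condEnt p (fun x => g (v i) (x (v i)))
          (fun x => restr ((Finset.Iio i).image v) (gmap g x)) :=
    Finset.sum_le_sum fun i _ => stepC i
  rw [hdecomp]
  linarith
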